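/- Let d ≥ 5 and let p ≥ d be prime. The only γ ∈ GL(2,ℚ) with L∘γ = L, where L(X,Y) = (X − pY)·∏_{n=0}^{d−2}(X − nY), are γ = Id if d is odd, and γ = ±Id if d is even. -/

import Mathlib

set_option maxHeartbeats 1000000

/-- `y` is the cyclic successor of `x` in the finite subset `S` of `ℚ`
(viewed inside the circle `ℝP¹`): every other point `u` of `S` satisfies the
cyclic orientation relation `(x,y,u)`. -/
def IsNext (S : Finset ℚ) (x y : ℚ) : Prop :=
  y ≠ x ∧ ∀ u ∈ S, u ≠ x → u ≠ y → 0 < (x - y) * (y - u) * (u - x)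

lemma isNext_unique {S : Finset ℚ} {x y y' : ℚ} (hy : y ∈ S) (hy' : y' ∈ S)
    (h1 : IsNext S x y) (h2 : IsNext S x y') : y = y' := by
  by_contra hne
  have P1 := h1.2 y' hy' h2.1 fun hh => hne hh.symm
  have P2 := h2.2 y hy h1.1 hne
  nlinarith [mul_pos P1 P2, sq_nonneg ((x - y) * (y - y') * (y' - x))]

lemma isNext_unique' {S : Finset ℚ} {x y y' : ℚ} (hy : y ∈ S) (hy' : y' ∈ S)
    (h1 : IsNext S y x) (h2 : IsNext S y' x) : y = y' := by
  by_contra hne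
  have P1 := h1.2 y' hy' (fun hh => hne hh.symm) h2.1.symm
  have P2 := h2.2 y hy hne h1.1.symm
  nlinarith [mul_pos P1 P2, sq_nonneg ((y - x) * (x - y') * (y' - y))]

/-- For d ≥ 5 and a prime p ≥ d, the only γ ∈ GL(2,ℚ) with L∘γ = L, where
L(X,Y) = (X − pY)·∏_{n=0}^{d−2}(X − nY), is the identity when d is odd, and ±Id
when d is even. -/
theorem stmt_16 (d : ℕ) (hd : 5 ≤ d) (p : ℕ) (hp : p.Prime) (hpd : d ≤ p)
    (M : Matrix (Fin 2) (Fin 2) ℚ) (hdet : M.det ≠ 0)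
    (h : ∀ x y : ℚ,
      ((M 0 0 * x + M 0 1 * y) - (p : ℚ) * (M 1 0 * x + M 1 1 * y)) *
          ∏ n ∈ Finset.range (d - 1),
            ((M 0 0 * x + M 0 1 * y) - (n : ℚ) * (M 1 0 * x + M 1 1 * y)) =
        (x - (p : ℚ) * y) * ∏ n ∈ Finset.range (d - 1), (x - (n : ℚ) * y)) :
    (Odd d → M = 1) ∧ (Even d → (M = 1 ∨ M = -1)) := by
  obtain ⟨D, rfl⟩ : ∃ D, d = D + 5 := ⟨d - 5, by omega⟩
  set a := M 0 0 with ha'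
  set b := M 0 1 with hb'
  set c := M 1 0 with hc'
  set e := M 1 1 with he'
  have hdet2 : a * e - b * c ≠ 0 := by
    rwa [Matrix.det_fin_two] at hdet
  have hD0 : (0:ℚ) ≤ (D:ℚ) := Nat.cast_nonneg D
  obtain ⟨S, hS⟩ : ∃ T : Finset ℚ, T = insert (p:ℚ) ((Finset.range (D+4)).image (fun n : ℕ => (n:ℚ))) := ⟨_, rfl⟩
  have hpnotin : (p:ℚ) ∉ (Finset.range (D+4)).image (fun n : ℕ => (n:ℚ)) := by
    intro hmem
    obtain ⟨n, hn, hne⟩ := Finset.mem_image.mp hmem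
    have : n = p := Nat.cast_injective hne
    have := Finset.mem_range.mp hn
    omega
  have memQ : ∀ n : ℕ, n < D + 4 → ((n:ℚ)) ∈ S := by
    intro n hn
    rw [hS]
    exact Finset.mem_insert_of_mem (Finset.mem_image_of_mem _ (Finset.mem_range.mpr hn))
  have memp : (p:ℚ) ∈ S := by rw [hS]; exact Finset.mem_insert_self _ _
  have hmemiff : ∀ x ∈ S, x = (p:ℚ) ∨ ∃ n : ℕ, n < D + 4 ∧ x = (n:ℚ) := by
    intro x hx
    rw [hS] at hx
    rcases Finset.mem_insert.mp hx with h' | h'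
    · exact Or.inl h'
    · obtain ⟨n, hn, hne⟩ := Finset.mem_image.mp h'
      exact Or.inr ⟨n, Finset.mem_range.mp hn, hne.symm⟩
  have hpQ : ((D:ℚ)) + 5 ≤ (p:ℚ) := by exact_mod_cast hpd
  have hProd : ∀ x y : ℚ,
      (∏ s ∈ S, ((a*x + b*y) - s*(c*x + e*y))) = ∏ s ∈ S, (x - s*y) := by
    intro x y
    rw [hS, Finset.prod_insert hpnotin, Finset.prod_insert hpnotin,
        Finset.prod_image (fun u _ v _ hh => Nat.cast_injective hh),
        Finset.prod_image (fun u _ v _ hh => Nat.cast_injective hh)]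
    exact h x y
  obtain ⟨γ, hγ⟩ : ∃ g : ℚ → ℚ, g = fun s => (a*s + b) / (c*s + e) := ⟨_, rfl⟩
  have hkey : ∀ s ∈ S, (c*s + e) ≠ 0 ∧ γ s ∈ S := by
    intro s hs
    have h1 := hProd s 1
    have hz : (∏ t ∈ S, (s - t*1)) = 0 := Finset.prod_eq_zero hs (by rw [mul_one, sub_self])
    rw [hz] at h1
    obtain ⟨t, htS, ht0⟩ := Finset.prod_eq_zero_iff.mp h1
    have hnum : a*s + b = t*(c*s + e) := by linear_combination ht0
    have hden : c*s + e ≠ 0 := by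
      intro h0
      apply hdet2
      have hnum0 : a*s + b = 0 := by rw [h0, mul_zero] at hnum; exact hnum
      linear_combination a * h0 - c * hnum0
    refine ⟨hden, ?_⟩
    have hst : γ s = t := by
      simp only [hγ]
      rw [hnum]
      exact mul_div_cancel_right₀ t hden
    rwa [hst]
  have hinj : ∀ s ∈ S, ∀ t ∈ S, γ s = γ t → s = t := by
    intro s hs t ht heq
    have hds := (hkey s hs).1
    have hdt := (hkey t ht).1
    simp only [hγ] at heq
    rw [div_eq_div_iff hds hdt] at heq
    have h0 : (a*e - b*c) * (s - t) = 0 := by linear_combination heq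
    rcases mul_eq_zero.mp h0 with h' | h'
    · exact absurd h' hdet2
    · exact sub_eq_zero.mp h'
  have hsurj : ∀ u ∈ S, ∃ t ∈ S, γ t = u := by
    have hsub : Finset.image γ S ⊆ S := by
      intro u hu
      obtain ⟨s, hs, rfl⟩ := Finset.mem_image.mp hu
      exact (hkey s hs).2
    have himg : Finset.image γ S = S := by
      apply Finset.eq_of_subset_of_card_le hsub
      rw [Finset.card_image_of_injOn (fun s hs t ht => hinj s hs t ht)]
    intro u hu
    rw [← himg] at hu
    obtain ⟨t, ht, h'⟩ := Finset.mem_image.mp hu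
    exact ⟨t, ht, h'⟩
  have hdiff : ∀ s t : ℚ, (c*s+e) ≠ 0 → (c*t+e) ≠ 0 →
      γ s - γ t = ((a*e - b*c) * (s - t)) / ((c*s+e) * (c*t+e)) := by
    intro s t hs ht
    simp only [hγ]
    rw [div_sub_div _ _ hs ht]
    ring
  have hQ : ∀ x ∈ S, ∀ y ∈ S, ∀ z ∈ S, ∀ w ∈ S,
      (γ x - γ y) * (γ z - γ w) * ((x - z) * (y - w)) =
      (x - y) * (z - w) * ((γ x - γ z) * (γ y - γ w)) := by
    intro x hx y hy z hz w hw
    have hnx := (hkey x hx).1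
    have hny := (hkey y hy).1
    have hnz := (hkey z hz).1
    have hnw := (hkey w hw).1
    rw [hdiff x y hnx hny, hdiff z w hnz hnw, hdiff x z hnx hnz, hdiff y w hny hnw]
    field_simp
  have hTt : ∀ x ∈ S, ∀ y ∈ S, ∀ u ∈ S,
      (γ x - γ y) * (γ y - γ u) * (γ u - γ x) * ((c*x+e)*((c*y+e)*(c*u+e)))^2 =
      (a*e - b*c)^3 * ((x - y) * (y - u) * (u - x)) := by
    intro x hx y hy u hu
    have hnx := (hkey x hx).1
    have hny := (hkey y hy).1
    have hnu := (hkey u hu).1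
    rw [hdiff x y hnx hny, hdiff y u hny hnu, hdiff u x hnu hnx]
    field_simp
  have hsq : ∀ x ∈ S, ∀ y ∈ S, ∀ u ∈ S, 0 < ((c*x+e)*((c*y+e)*(c*u+e)))^2 := by
    intro x hx y hy u hu
    have hne : (c*x+e)*((c*y+e)*(c*u+e)) ≠ 0 :=
      mul_ne_zero (hkey x hx).1 (mul_ne_zero (hkey y hy).1 (hkey u hu).1)
    exact lt_of_le_of_ne (sq_nonneg _) (Ne.symm (pow_ne_zero 2 hne))
  have hnext_pos : 0 < a*e - b*c → ∀ x ∈ S, ∀ y ∈ S, IsNext S x y → IsNext S (γ x) (γ y) := by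
    intro hΔ x hx y hy hxy
    constructor
    · intro hgeq
      exact hxy.1 (hinj y hy x hx hgeq)
    · intro u' hu' h1 h2
      obtain ⟨u, hu, rfl⟩ := hsurj u' hu'
      have hux : u ≠ x := fun hh => h1 (by rw [hh])
      have huy : u ≠ y := fun hh => h2 (by rw [hh])
      have hT := hxy.2 u hu hux huy
      have heq := hTt x hx y hy u hu
      have hsq' := hsq x hx y hy u hu
      have hR : 0 < (a*e - b*c)^3 * ((x - y) * (y - u) * (u - x)) :=
        mul_pos (pow_pos hΔ 3) hT
      by_contra hP
      push_neg at hP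
      have hle : (γ x - γ y) * (γ y - γ u) * (γ u - γ x) * ((c*x+e)*((c*y+e)*(c*u+e)))^2 ≤ 0 :=
        mul_nonpos_of_nonpos_of_nonneg hP hsq'.le
      rw [heq] at hle
      linarith
  have hnext_neg : a*e - b*c < 0 → ∀ x ∈ S, ∀ y ∈ S, IsNext S x y → IsNext S (γ y) (γ x) := by
    intro hΔ x hx y hy hxy
    constructor
    · intro hgeq
      exact hxy.1 (hinj x hx y hy hgeq).symm
    · intro u' hu' h1 h2
      obtain ⟨u, hu, rfl⟩ := hsurj u' hu'
      have huy : u ≠ y := fun hh => h1 (by rw [hh])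
      have hux : u ≠ x := fun hh => h2 (by rw [hh])
      have hT := hxy.2 u hu hux huy
      have heq := hTt x hx y hy u hu
      have hsq' := hsq x hx y hy u hu
      have hcube : (a*e-b*c)^3 < 0 := (Odd.pow_neg_iff (⟨1, by norm_num⟩ : Odd 3)).mpr hΔ
      have hR : (a*e - b*c)^3 * ((x - y) * (y - u) * (u - x)) < 0 :=
        mul_neg_of_neg_of_pos hcube hT
      have hPneg : (γ x - γ y) * (γ y - γ u) * (γ u - γ x) < 0 := by
        by_contra hP
        push_neg at hP
        have hge : 0 ≤ (γ x - γ y) * (γ y - γ u) * (γ u - γ x) * ((c*x+e)*((c*y+e)*(c*u+e)))^2 :=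
          mul_nonneg hP hsq'.le
        rw [heq] at hge
        linarith
      have hring : (γ y - γ x) * (γ x - γ u) * (γ u - γ y) =
          -((γ x - γ y) * (γ y - γ u) * (γ u - γ x)) := by ring
      rw [hring]
      linarith
  have stepP : 0 < a*e - b*c → ∀ x ∈ S, ∀ y ∈ S, ∀ X Z : ℚ, Z ∈ S →
      IsNext S x y → γ x = X → IsNext S X Z → γ y = Z := by
    intro hΔ x hx y hy X Z hZ hxy hgx hXZ
    have t := hnext_pos hΔ x hx y hy hxy
    rw [hgx] at t
    exact isNext_unique (hkey y hy).2 hZ t hXZ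
  have stepN : a*e - b*c < 0 → ∀ x ∈ S, ∀ y ∈ S, ∀ X Z : ℚ, Z ∈ S →
      IsNext S x y → γ x = X → IsNext S Z X → γ y = Z := by
    intro hΔ x hx y hy X Z hZ hxy hgx hZX
    have t := hnext_neg hΔ x hx y hy hxy
    rw [hgx] at t
    exact isNext_unique' (hkey y hy).2 hZ t hZX
  have stepN' : a*e - b*c < 0 → ∀ x ∈ S, ∀ y ∈ S, ∀ Y Z : ℚ, Z ∈ S →
      IsNext S x y → γ y = Y → IsNext S Y Z → γ x = Z := by
    intro hΔ x hx y hy Y Z hZ hxy hgy hYZ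
    have t := hnext_neg hΔ x hx y hy hxy
    rw [hgy] at t
    exact isNext_unique (hkey x hx).2 hZ t hYZ
  have next_nat : ∀ n : ℕ, n + 1 < D + 4 → IsNext S ((n:ℚ)) (((n+1:ℕ):ℚ)) := by
    intro n hn
    constructor
    · intro hh
      have : n + 1 = n := Nat.cast_injective hh
      omega
    · intro u hu h1 h2
      rcases hmemiff u hu with rfl | ⟨m, hm, rfl⟩
      · have h3 : ((n:ℚ)) + 2 ≤ (p:ℚ) := by exact_mod_cast (by omega : n + 2 ≤ p)
        push_cast
        nlinarith [h3]
      · have hmn : m ≠ n := fun hh => h1 (by rw [hh])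
        have hmn1 : m ≠ n + 1 := fun hh => h2 (by rw [hh])
        push_cast
        rcases (by omega : m + 1 ≤ n ∨ n + 2 ≤ m) with hcase | hcase
        · have hx : (m:ℚ) + 1 ≤ (n:ℚ) := by exact_mod_cast hcase
          nlinarith [hx]
        · have hx : (n:ℚ) + 2 ≤ (m:ℚ) := by exact_mod_cast hcase
          nlinarith [hx]
  have next_top : IsNext S (((D+3:ℕ):ℚ)) ((p:ℚ)) := by
    constructor
    · intro hh
      have : p = D + 3 := Nat.cast_injective hh
      omega
    · intro u hu h1 h2
      rcases hmemiff u hu with rfl | ⟨m, hm, rfl⟩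
      · exact absurd rfl h2
      · have hm3 : m ≠ D + 3 := fun hh => h1 (by rw [hh])
        have f1 : 0 < (p:ℚ) - (((D+3:ℕ)):ℚ) := by
          have : ((D+3:ℕ):ℚ) + 1 ≤ (p:ℚ) := by exact_mod_cast (by omega : D + 3 + 1 ≤ p)
          linarith
        have f2 : 0 < (p:ℚ) - (m:ℚ) := by
          have : (m:ℚ) + 1 ≤ (p:ℚ) := by exact_mod_cast (by omega : m + 1 ≤ p)
          linarith
        have f3 : 0 < (((D+3:ℕ)):ℚ) - (m:ℚ) := by
          have : (m:ℚ) + 1 ≤ ((D+3:ℕ):ℚ) := by exact_mod_cast (by omega : m + 1 ≤ D + 3)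
          linarith
        nlinarith [mul_pos (mul_pos f1 f2) f3]
  have next_p0 : IsNext S ((p:ℚ)) (((0:ℕ):ℚ)) := by
    constructor
    · intro hh
      have : (0:ℕ) = p := Nat.cast_injective hh
      omega
    · intro u hu h1 h2
      rcases hmemiff u hu with rfl | ⟨m, hm, rfl⟩
      · exact absurd rfl h1
      · have hm0 : m ≠ 0 := fun hh => h2 (by rw [hh, Nat.cast_zero])
        have f1 : 0 < (p:ℚ) := by
          have : (1:ℚ) ≤ (p:ℚ) := by exact_mod_cast (by omega : 1 ≤ p)
          linarith
        have f2 : 0 < (m:ℚ) := by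
          have : (1:ℚ) ≤ (m:ℚ) := by exact_mod_cast (by omega : 1 ≤ m)
          linarith
        have f3 : 0 < (p:ℚ) - (m:ℚ) := by
          have : (m:ℚ) + 1 ≤ (p:ℚ) := by exact_mod_cast (by omega : m + 1 ≤ p)
          linarith
        push_cast
        nlinarith [mul_pos (mul_pos f1 f2) f3]
  have c0 : ((0:ℕ):ℚ) = 0 := Nat.cast_zero
  have c1 : ((1:ℕ):ℚ) = 1 := Nat.cast_one
  have c2 : ((2:ℕ):ℚ) = 2 := by norm_num
  have cD1 : ((D+1:ℕ):ℚ) = (D:ℚ)+1 := by push_cast; ring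
  have cD2 : ((D+2:ℕ):ℚ) = (D:ℚ)+2 := by push_cast; ring
  have cD3 : ((D+3:ℕ):ℚ) = (D:ℚ)+3 := by push_cast; ring
  have mem0 : (0:ℚ) ∈ S := by have := memQ 0 (by omega); rwa [c0] at this
  have mem1 : (1:ℚ) ∈ S := by have := memQ 1 (by omega); rwa [c1] at this
  have mem2 : (2:ℚ) ∈ S := by have := memQ 2 (by omega); rwa [c2] at this
  have memD : ((D:ℚ)) ∈ S := memQ D (by omega)
  have memD1 : ((D:ℚ)+1) ∈ S := by have := memQ (D+1) (by omega); rwa [cD1] at this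
  have memD2 : ((D:ℚ)+2) ∈ S := by have := memQ (D+2) (by omega); rwa [cD2] at this
  have memD3 : ((D:ℚ)+3) ∈ S := by have := memQ (D+3) (by omega); rwa [cD3] at this
  have nxt01 : IsNext S (0:ℚ) (1:ℚ) := by
    have := next_nat 0 (by omega)
    rwa [c0, show ((0+1:ℕ):ℚ) = 1 by norm_num] at this
  have nxt12 : IsNext S (1:ℚ) (2:ℚ) := by
    have := next_nat 1 (by omega)
    rwa [c1, show ((1+1:ℕ):ℚ) = 2 by norm_num] at this
  have nxtDD1 : IsNext S ((D:ℚ)) ((D:ℚ)+1) := by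
    have := next_nat D (by omega)
    rwa [cD1] at this
  have nxtD1D2 : IsNext S ((D:ℚ)+1) ((D:ℚ)+2) := by
    have := next_nat (D+1) (by omega)
    rwa [cD1, show ((D+1+1:ℕ):ℚ) = (D:ℚ)+2 by push_cast; ring] at this
  have nxtD2D3 : IsNext S ((D:ℚ)+2) ((D:ℚ)+3) := by
    have := next_nat (D+2) (by omega)
    rwa [cD2, show ((D+2+1:ℕ):ℚ) = (D:ℚ)+3 by push_cast; ring] at this
  have nxtTop : IsNext S ((D:ℚ)+3) (p:ℚ) := by
    have := next_top
    rwa [cD3] at this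
  have nxtP0 : IsNext S (p:ℚ) (0:ℚ) := by
    have := next_p0
    rwa [c0] at this
  obtain ⟨t, htS, htp⟩ := hsurj (p:ℚ) memp
  have trip : b = 0 ∧ c = 0 ∧ a = e := by
    rcases hdet2.lt_or_gt with hneg | hpos
    · -- determinant negative: orientation reversing, always contradiction
      exfalso
      rcases hmemiff t htS with rfl | ⟨n, hn, rfl⟩
      · -- C5 : t = p
        have g1 : γ (0:ℚ) = (D:ℚ)+3 :=
          stepN hneg (p:ℚ) memp (0:ℚ) mem0 (p:ℚ) ((D:ℚ)+3) memD3 nxtP0 htp nxtTop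
        have g2 : γ (1:ℚ) = (D:ℚ)+2 :=
          stepN hneg (0:ℚ) mem0 (1:ℚ) mem1 ((D:ℚ)+3) ((D:ℚ)+2) memD2 nxt01 g1 nxtD2D3
        have g3 : γ (2:ℚ) = (D:ℚ)+1 :=
          stepN hneg (1:ℚ) mem1 (2:ℚ) mem2 ((D:ℚ)+2) ((D:ℚ)+1) memD1 nxt12 g2 nxtD1D2
        have hq := hQ (p:ℚ) memp (0:ℚ) mem0 (1:ℚ) mem1 (2:ℚ) mem2
        rw [htp, g1, g2, g3] at hq
        have hc2 : 2*(p:ℚ) = (D:ℚ)+3 := by linear_combination ((1:ℚ)/2) * hq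
        linarith
      · rcases (by omega : n ≤ D ∨ n = D + 1 ∨ n = D + 2 ∨ n = D + 3) with hcase | hcase | hcase | hcase
        · -- C1 : t = n ≤ D
          have memn : ((n:ℚ)) ∈ S := memQ n (by omega)
          have cn1 : ((n+1:ℕ):ℚ) = (n:ℚ)+1 := by push_cast; ring
          have cn2 : ((n+2:ℕ):ℚ) = (n:ℚ)+2 := by push_cast; ring
          have cn3 : ((n+3:ℕ):ℚ) = (n:ℚ)+3 := by push_cast; ring
          have memn1 : ((n:ℚ)+1) ∈ S := by have := memQ (n+1) (by omega); rwa [cn1] at this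
          have memn2 : ((n:ℚ)+2) ∈ S := by have := memQ (n+2) (by omega); rwa [cn2] at this
          have memn3 : ((n:ℚ)+3) ∈ S := by have := memQ (n+3) (by omega); rwa [cn3] at this
          have nxtn1 : IsNext S ((n:ℚ)) ((n:ℚ)+1) := by
            have := next_nat n (by omega); rwa [cn1] at this
          have nxtn2 : IsNext S ((n:ℚ)+1) ((n:ℚ)+2) := by
            have := next_nat (n+1) (by omega)
            rwa [cn1, show ((n+1+1:ℕ):ℚ) = (n:ℚ)+2 by push_cast; ring] at this
          have nxtn3 : IsNext S ((n:ℚ)+2) ((n:ℚ)+3) := by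
            have := next_nat (n+2) (by omega)
            rwa [cn2, show ((n+2+1:ℕ):ℚ) = (n:ℚ)+3 by push_cast; ring] at this
          have g1 : γ ((n:ℚ)+1) = (D:ℚ)+3 :=
            stepN hneg ((n:ℚ)) memn ((n:ℚ)+1) memn1 (p:ℚ) ((D:ℚ)+3) memD3 nxtn1 htp nxtTop
          have g2 : γ ((n:ℚ)+2) = (D:ℚ)+2 :=
            stepN hneg ((n:ℚ)+1) memn1 ((n:ℚ)+2) memn2 ((D:ℚ)+3) ((D:ℚ)+2) memD2 nxtn2 g1 nxtD2D3
          have g3 : γ ((n:ℚ)+3) = (D:ℚ)+1 :=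
            stepN hneg ((n:ℚ)+2) memn2 ((n:ℚ)+3) memn3 ((D:ℚ)+2) ((D:ℚ)+1) memD1 nxtn3 g2 nxtD1D2
          have hq := hQ ((n:ℚ)) memn ((n:ℚ)+1) memn1 ((n:ℚ)+2) memn2 ((n:ℚ)+3) memn3
          rw [htp, g1, g2, g3] at hq
          have hc2 : (p:ℚ) = (D:ℚ)+4 := by linear_combination ((1:ℚ)/2) * hq
          linarith
        · -- C2 : t = D+1
          subst hcase
          rw [cD1] at htp
          have g1 : γ ((D:ℚ)+2) = (D:ℚ)+3 :=
            stepN hneg ((D:ℚ)+1) memD1 ((D:ℚ)+2) memD2 (p:ℚ) ((D:ℚ)+3) memD3 nxtD1D2 htp nxtTop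
          have gb : γ ((D:ℚ)) = 0 :=
            stepN' hneg ((D:ℚ)) memD ((D:ℚ)+1) memD1 (p:ℚ) (0:ℚ) mem0 nxtDD1 htp nxtP0
          have g2 : γ ((D:ℚ)+3) = (D:ℚ)+2 :=
            stepN hneg ((D:ℚ)+2) memD2 ((D:ℚ)+3) memD3 ((D:ℚ)+3) ((D:ℚ)+2) memD2 nxtD2D3 g1 nxtD2D3
          have hq := hQ ((D:ℚ)) memD ((D:ℚ)+1) memD1 ((D:ℚ)+2) memD2 ((D:ℚ)+3) memD3
          rw [htp, gb, g1, g2] at hq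
          have hfac : ((D:ℚ)-1) * (p:ℚ) = ((D:ℚ)+3)*((D:ℚ)+2) := by linear_combination hq
          rcases (by omega : D = 0 ∨ D = 1 ∨ 2 ≤ D) with hD | hD | hD
          · subst hD; norm_num at hfac; linarith
          · subst hD; norm_num at hfac
          · have hcast : ((D-1:ℕ):ℚ) = (D:ℚ) - 1 := by
              rw [Nat.cast_sub (by omega : 1 ≤ D)]; norm_num
            have hnat : (D-1) * p = (D+3)*(D+2) := by
              have hq2 : (((D-1) * p : ℕ):ℚ) = (((D+3)*(D+2) : ℕ):ℚ) := by
                push_cast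
                rw [hcast]
                linear_combination hfac
              exact_mod_cast hq2
            have hdvd : p ∣ (D+3)*(D+2) := ⟨D-1, by rw [← hnat]; ring⟩
            rcases (Nat.Prime.dvd_mul hp).mp hdvd with hdv | hdv
            · have := Nat.le_of_dvd (by omega) hdv; omega
            · have := Nat.le_of_dvd (by omega) hdv; omega
        · -- C3 : t = D+2
          subst hcase
          rw [cD2] at htp
          have g1 : γ ((D:ℚ)+3) = (D:ℚ)+3 :=
            stepN hneg ((D:ℚ)+2) memD2 ((D:ℚ)+3) memD3 (p:ℚ) ((D:ℚ)+3) memD3 nxtD2D3 htp nxtTop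
          have g2 : γ (p:ℚ) = (D:ℚ)+2 :=
            stepN hneg ((D:ℚ)+3) memD3 (p:ℚ) memp ((D:ℚ)+3) ((D:ℚ)+2) memD2 nxtTop g1 nxtD2D3
          have g3 : γ (0:ℚ) = (D:ℚ)+1 :=
            stepN hneg (p:ℚ) memp (0:ℚ) mem0 ((D:ℚ)+2) ((D:ℚ)+1) memD1 nxtP0 g2 nxtD1D2
          have hq := hQ ((D:ℚ)+2) memD2 ((D:ℚ)+3) memD3 (p:ℚ) memp (0:ℚ) mem0
          rw [htp, g1, g2, g3] at hq
          have hfac : ((p:ℚ) - ((D:ℚ)+2)) * (((D:ℚ)+3)^2 - ((D:ℚ)+1)*(p:ℚ)) = 0 := by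
            linear_combination hq
          rcases mul_eq_zero.mp hfac with hx | hx
          · linarith
          · have hnat : (D+3)^2 = (D+1) * p := by
              have hq2 : (((D+3)^2 : ℕ):ℚ) = (((D+1)*p : ℕ):ℚ) := by push_cast; linarith
              exact_mod_cast hq2
            have hdvd : p ∣ (D+3)^2 := ⟨D+1, by rw [hnat]; ring⟩
            have := Nat.le_of_dvd (by omega) (hp.dvd_of_dvd_pow hdvd)
            omega
        · -- C4 : t = D+3
          subst hcase
          rw [cD3] at htp
          have g1 : γ (p:ℚ) = (D:ℚ)+3 :=
            stepN hneg ((D:ℚ)+3) memD3 (p:ℚ) memp (p:ℚ) ((D:ℚ)+3) memD3 nxtTop htp nxtTop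
          have g2 : γ (0:ℚ) = (D:ℚ)+2 :=
            stepN hneg (p:ℚ) memp (0:ℚ) mem0 ((D:ℚ)+3) ((D:ℚ)+2) memD2 nxtP0 g1 nxtD2D3
          have g3 : γ (1:ℚ) = (D:ℚ)+1 :=
            stepN hneg (0:ℚ) mem0 (1:ℚ) mem1 ((D:ℚ)+2) ((D:ℚ)+1) memD1 nxt01 g2 nxtD1D2
          have hq := hQ ((D:ℚ)+3) memD3 (p:ℚ) memp (0:ℚ) mem0 (1:ℚ) mem1
          rw [htp, g1, g2, g3] at hq
          have hfac : ((p:ℚ) - ((D:ℚ)+3)) * (((D:ℚ)+1) * ((p:ℚ)+1)) = 0 := by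
            linear_combination hq
          rcases mul_eq_zero.mp hfac with hx | hx
          · linarith
          · rcases mul_eq_zero.mp hx with hy | hy
            · linarith
            · linarith
    · -- determinant positive: orientation preserving
      rcases hmemiff t htS with rfl | ⟨n, hn, rfl⟩
      · -- B5 : t = p : the identity branch
        have g0 : γ (0:ℚ) = 0 :=
          stepP hpos (p:ℚ) memp (0:ℚ) mem0 (p:ℚ) (0:ℚ) mem0 nxtP0 htp nxtP0
        have g1 : γ (1:ℚ) = 1 :=
          stepP hpos (0:ℚ) mem0 (1:ℚ) mem1 (0:ℚ) (1:ℚ) mem1 nxt01 g0 nxt01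
        have g2 : γ (2:ℚ) = 2 :=
          stepP hpos (1:ℚ) mem1 (2:ℚ) mem2 (1:ℚ) (2:ℚ) mem2 nxt12 g1 nxt12
        have hd0 := (hkey (0:ℚ) mem0).1
        have hd1 := (hkey (1:ℚ) mem1).1
        have hd2 := (hkey (2:ℚ) mem2).1
        simp only [hγ] at g0 g1 g2
        rw [div_eq_iff hd0] at g0
        rw [div_eq_iff hd1] at g1
        rw [div_eq_iff hd2] at g2
        have eb : b = 0 := by linear_combination g0
        have e1 : a + b = c + e := by linear_combination g1
        have e2 : a*2 + b = c*4 + e*2 := by linear_combination g2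
        have ec : c = 0 := by linarith
        exact ⟨eb, ec, by linarith⟩
      · exfalso
        rcases (by omega : n ≤ D ∨ n = D + 1 ∨ n = D + 2 ∨ n = D + 3) with hcase | hcase | hcase | hcase
        · -- B1 : t = n ≤ D
          have memn : ((n:ℚ)) ∈ S := memQ n (by omega)
          have cn1 : ((n+1:ℕ):ℚ) = (n:ℚ)+1 := by push_cast; ring
          have cn2 : ((n+2:ℕ):ℚ) = (n:ℚ)+2 := by push_cast; ring
          have cn3 : ((n+3:ℕ):ℚ) = (n:ℚ)+3 := by push_cast; ring
          have memn1 : ((n:ℚ)+1) ∈ S := by have := memQ (n+1) (by omega); rwa [cn1] at this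
          have memn2 : ((n:ℚ)+2) ∈ S := by have := memQ (n+2) (by omega); rwa [cn2] at this
          have memn3 : ((n:ℚ)+3) ∈ S := by have := memQ (n+3) (by omega); rwa [cn3] at this
          have nxtn1 : IsNext S ((n:ℚ)) ((n:ℚ)+1) := by
            have := next_nat n (by omega); rwa [cn1] at this
          have nxtn2 : IsNext S ((n:ℚ)+1) ((n:ℚ)+2) := by
            have := next_nat (n+1) (by omega)
            rwa [cn1, show ((n+1+1:ℕ):ℚ) = (n:ℚ)+2 by push_cast; ring] at this
          have nxtn3 : IsNext S ((n:ℚ)+2) ((n:ℚ)+3) := by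
            have := next_nat (n+2) (by omega)
            rwa [cn2, show ((n+2+1:ℕ):ℚ) = (n:ℚ)+3 by push_cast; ring] at this
          have g1 : γ ((n:ℚ)+1) = 0 :=
            stepP hpos ((n:ℚ)) memn ((n:ℚ)+1) memn1 (p:ℚ) (0:ℚ) mem0 nxtn1 htp nxtP0
          have g2 : γ ((n:ℚ)+2) = 1 :=
            stepP hpos ((n:ℚ)+1) memn1 ((n:ℚ)+2) memn2 (0:ℚ) (1:ℚ) mem1 nxtn2 g1 nxt01
          have g3 : γ ((n:ℚ)+3) = 2 :=
            stepP hpos ((n:ℚ)+2) memn2 ((n:ℚ)+3) memn3 (1:ℚ) (2:ℚ) mem2 nxtn3 g2 nxt12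
          have hq := hQ ((n:ℚ)) memn ((n:ℚ)+1) memn1 ((n:ℚ)+2) memn2 ((n:ℚ)+3) memn3
          rw [htp, g1, g2, g3] at hq
          have hc2 : (p:ℚ) = -1 := by linear_combination (-(1:ℚ)/2) * hq
          linarith
        · -- B2 : t = D+1
          subst hcase
          rw [cD1] at htp
          have g1 : γ ((D:ℚ)+2) = 0 :=
            stepP hpos ((D:ℚ)+1) memD1 ((D:ℚ)+2) memD2 (p:ℚ) (0:ℚ) mem0 nxtD1D2 htp nxtP0
          have g2 : γ ((D:ℚ)+3) = 1 :=
            stepP hpos ((D:ℚ)+2) memD2 ((D:ℚ)+3) memD3 (0:ℚ) (1:ℚ) mem1 nxtD2D3 g1 nxt01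
          have g3 : γ (p:ℚ) = 2 :=
            stepP hpos ((D:ℚ)+3) memD3 (p:ℚ) memp (1:ℚ) (2:ℚ) mem2 nxtTop g2 nxt12
          have hq := hQ ((D:ℚ)+1) memD1 ((D:ℚ)+2) memD2 ((D:ℚ)+3) memD3 (p:ℚ) memp
          rw [htp, g1, g2, g3] at hq
          have hc2 : 2*(p:ℚ) = (D:ℚ)+3 := by linear_combination (-(1:ℚ)/2) * hq
          linarith
        · -- B3 : t = D+2
          subst hcase
          rw [cD2] at htp
          have g1 : γ ((D:ℚ)+3) = 0 :=
            stepP hpos ((D:ℚ)+2) memD2 ((D:ℚ)+3) memD3 (p:ℚ) (0:ℚ) mem0 nxtD2D3 htp nxtP0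
          have g2 : γ (p:ℚ) = 1 :=
            stepP hpos ((D:ℚ)+3) memD3 (p:ℚ) memp (0:ℚ) (1:ℚ) mem1 nxtTop g1 nxt01
          have g3 : γ (0:ℚ) = 2 :=
            stepP hpos (p:ℚ) memp (0:ℚ) mem0 (1:ℚ) (2:ℚ) mem2 nxtP0 g2 nxt12
          have hq := hQ ((D:ℚ)+2) memD2 ((D:ℚ)+3) memD3 (p:ℚ) memp (0:ℚ) mem0
          rw [htp, g1, g2, g3] at hq
          have hfac : (p:ℚ) * (((D:ℚ)+1) * ((p:ℚ) - ((D:ℚ)+4))) = 0 := by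
            linear_combination hq
          rcases mul_eq_zero.mp hfac with hx | hx
          · linarith
          · rcases mul_eq_zero.mp hx with hy | hy
            · linarith
            · linarith
        · -- B4 : t = D+3
          subst hcase
          rw [cD3] at htp
          have g1 : γ (p:ℚ) = 0 :=
            stepP hpos ((D:ℚ)+3) memD3 (p:ℚ) memp (p:ℚ) (0:ℚ) mem0 nxtTop htp nxtP0
          have g2 : γ (0:ℚ) = 1 :=
            stepP hpos (p:ℚ) memp (0:ℚ) mem0 (0:ℚ) (1:ℚ) mem1 nxtP0 g1 nxt01
          have g3 : γ (1:ℚ) = 2 :=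
            stepP hpos (0:ℚ) mem0 (1:ℚ) mem1 (1:ℚ) (2:ℚ) mem2 nxt01 g2 nxt12
          have hq := hQ ((D:ℚ)+3) memD3 (p:ℚ) memp (0:ℚ) mem0 (1:ℚ) mem1
          rw [htp, g1, g2, g3] at hq
          have hfac : ((p:ℚ)-1) * (((D:ℚ)+1)*(p:ℚ) + 2*(D:ℚ)+6) = 0 := by
            linear_combination (-(1:ℚ)) * hq
          rcases mul_eq_zero.mp hfac with hx | hx
          · linarith
          · nlinarith [hpQ, hD0]
  obtain ⟨hb0, hc0, hae0⟩ := trip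
  have hcard : S.card = D + 5 := by
    rw [hS, Finset.card_insert_of_notMem hpnotin,
        Finset.card_image_of_injective _ Nat.cast_injective, Finset.card_range]
  have hA : a ^ (D+5) = 1 := by
    have h10 := hProd 1 0
    have hL : (∏ s ∈ S, ((a*1 + b*0) - s*(c*1 + e*0))) = a ^ (D+5) := by
      rw [show (∏ s ∈ S, ((a*1 + b*0) - s*(c*1 + e*0))) = ∏ s ∈ S, a from
            Finset.prod_congr rfl (fun s _ => by rw [hb0, hc0]; ring),
          Finset.prod_const, hcard]
    have hR : (∏ s ∈ S, ((1:ℚ) - s*0)) = 1 :=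
      Finset.prod_eq_one (fun s _ => by ring)
    rw [hL, hR] at h10
    exact h10
  have habs : a = 1 ∨ a = -1 := by
    have h1 : |a| ^ (D+5) = 1 := by rw [← abs_pow, hA, abs_one]
    have h2 : |a| = 1 := by
      by_contra hne
      rcases lt_or_gt_of_ne hne with hlt | hgt
      · have := pow_lt_one₀ (abs_nonneg a) hlt (by omega : D+5 ≠ 0)
        linarith
      · have := one_lt_pow₀ hgt (by omega : D+5 ≠ 0)
        linarith
    exact (abs_eq (by norm_num : (0:ℚ) ≤ 1)).mp h2
  have hM1 : a = 1 → M = 1 := by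
    intro h1
    have hMa : M = !![a, b; c, e] := by
      rw [ha', hb', hc', he']
      exact Matrix.eta_fin_two M
    rw [hMa, hb0, hc0, ← hae0, h1]
    exact Matrix.one_fin_two.symm
  have hMneg : a = -1 → M = -1 := by
    intro h1
    have hMa : M = !![a, b; c, e] := by
      rw [ha', hb', hc', he']
      exact Matrix.eta_fin_two M
    rw [hMa, hb0, hc0, ← hae0, h1]
    ext i j
    fin_cases i <;> fin_cases j <;>
      simp [Matrix.neg_apply, Matrix.one_apply]
  constructor
  · intro hodd
    rcases habs with h1 | h1
    · exact hM1 h1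
    · exfalso
      rw [h1, Odd.neg_one_pow hodd] at hA
      norm_num at hA
  · intro _
    rcases habs with h1 | h1
    · exact Or.inl (hM1 h1)
    · exact Or.inr (hMneg h1)
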